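/- Let V be an (n+1)-dimensional vector space over F_q, q odd, n+1 ≥ 5, with a nondegenerate symmetric bilinear form of plus type. If p and p' are any two nondegenerate 1-dimensional subspaces, then there exists an elliptic 2-dimensional subspace l containing p' such that ⟨p⟩ + l is a nondegenerate 3-dimensional subspace, and some elliptic 2-dimensional subspace through p meets l in a nondegenerate 1-dimensional subspace. In particular, the graph on nondegenerate 1-dimensional subspaces with adjacency 'lying together on an elliptic 2-dimensional subspace' has diameter at most two. -/

import Mathlib

open Module

/-- A nondegenerate symmetric bilinear form on a `d`-dimensional space over a finite
field of odd order is of *plus type*: for even `d` this means `(-1)^(d/2)` times the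
discriminant (Gram determinant, well defined modulo squares) is a square; for odd `d`
the convention is that the form is of plus type iff `(-1)^⌊d/2⌋` times the
discriminant is a square exactly when `-1` is a square. -/
def BIsPlusType {F M : Type*} [Field F] [AddCommGroup M] [Module F M]
    (B : LinearMap.BilinForm F M) : Prop :=
  ∃ (d : ℕ) (b : Basis (Fin d) F M),
    if Even d then IsSquare ((-1 : F) ^ (d / 2) * (Matrix.of fun i j => B (b i) (b j)).det)
    else (IsSquare ((-1 : F) ^ (d / 2) * (Matrix.of fun i j => B (b i) (b j)).det) ↔
      IsSquare (-1 : F))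

/-- A subspace `W` is an *elliptic line* for `B` if it is 2-dimensional,
nondegenerate and anisotropic. -/
def IsEllipticLine {F V : Type*} [Field F] [AddCommGroup V] [Module F V]
    (B : LinearMap.BilinForm F V) (W : Submodule F V) : Prop :=
  finrank F W = 2 ∧ (B.restrict W).Nondegenerate ∧ ∀ v ∈ W, B v v = 0 → v = 0


section EllipticHelpers

open Module Polynomial

variable {F V : Type*} [Field F] [AddCommGroup V] [Module F V]

private lemma nonsquare_sq_mul {ν : F} (hν : ¬ IsSquare ν) {t : F} (ht : t ≠ 0) :
    ¬ IsSquare (t ^ 2 * ν) := by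
  rintro ⟨s, hs⟩
  refine hν ⟨s / t, ?_⟩
  field_simp
  rw [mul_comm, hs]; ring

private lemma aniso_of_nonsquare {a b x y : F} (h : ¬ IsSquare (-(a * b)))
    (hxy : a * x ^ 2 + b * y ^ 2 = 0) : x = 0 ∧ y = 0 := by
  have ha : a ≠ 0 := by rintro rfl; exact h ⟨0, by ring⟩
  have hy : y = 0 := by
    by_contra hy
    refine h ⟨a * x / y, ?_⟩
    field_simp
    linear_combination (-1 : F) * hxy
  refine ⟨?_, hy⟩
  subst hy
  have hx2 : x ^ 2 = 0 := by
    have h0 : a * x ^ 2 = 0 := by linear_combination hxy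
    exact (mul_eq_zero.mp h0).resolve_left ha
  exact pow_eq_zero_iff (by norm_num) |>.mp hx2

private lemma two_ne_zero_of_ringChar {F : Type*} [Field F] (hF : ringChar F ≠ 2) :
    (2 : F) ≠ 0 := by
  intro h
  have := (CharP.cast_eq_zero_iff F (ringChar F) 2).mp (by exact_mod_cast h)
  rcases (Nat.dvd_prime Nat.prime_two).mp this with h1 | h2
  · exact CharP.ringChar_ne_one (R := F) h1
  · exact hF h2

private lemma bsymm {B : LinearMap.BilinForm F V} (hsymm : B.IsSymm) (x y : V) :
    B y x = B x y := (hsymm.eq x y).symm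

private lemma bilin_self_expand (B : LinearMap.BilinForm F V) (hsymm : B.IsSymm) (a b : F)
    {u v : V} (huv : B u v = 0) :
    B (a • u + b • v) (a • u + b • v) = B u u * a ^ 2 + B v v * b ^ 2 := by
  have h2 : B v u = 0 := by rw [← hsymm.eq u v, huv]
  simp [smul_eq_mul, huv, h2]
  try ring

private lemma span_pair_eq_range (u v : V) : (Submodule.span F {u, v}) =
    Submodule.span F (Set.range ![u, v]) := by
  congr 1
  simp [Matrix.range_cons, Matrix.range_empty, Set.pair_comm]

private lemma isEllipticLine_span_pair {B : LinearMap.BilinForm F V} (hsymm : B.IsSymm)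
    {u v : V} (huv : B u v = 0) (h : ¬ IsSquare (-(B u u * B v v))) :
    IsEllipticLine B (Submodule.span F {u, v}) := by
  have haniso : ∀ z ∈ Submodule.span F ({u, v} : Set V), B z z = 0 → z = 0 := by
    intro z hz hzz
    obtain ⟨a, b, rfl⟩ := Submodule.mem_span_pair.mp hz
    rw [bilin_self_expand B hsymm a b huv] at hzz
    obtain ⟨ha, hb⟩ := aniso_of_nonsquare h hzz
    simp [ha, hb]
  have hli : LinearIndependent F ![u, v] := by
    rw [Fintype.linearIndependent_iff]
    intro g hg
    have hmem : g 0 • u + g 1 • v = 0 := by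
      simpa [Fin.sum_univ_two] using hg
    have hz := bilin_self_expand B hsymm (g 0) (g 1) huv
    rw [hmem] at hz
    simp at hz
    obtain ⟨h0, h1⟩ := aniso_of_nonsquare h hz.symm
    intro i; fin_cases i <;> assumption
  refine ⟨?_, ?_, haniso⟩
  · rw [span_pair_eq_range, finrank_span_eq_card hli]
    simp
  · haveI := FiniteDimensional.span_of_finite F (Set.toFinite ({u, v} : Set V))
    refine LinearMap.BilinForm.Nondegenerate.ofSeparatingLeft ?_
    intro m hm
    have h1 : B (m : V) (m : V) = 0 := by
      simpa using hm m
    exact Subtype.ext (haniso (m : V) m.2 h1)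

private lemma mem_span_triple {u v w x : V} :
    x ∈ Submodule.span F {u, v, w} ↔ ∃ a b c : F, x = a • u + b • v + c • w := by
  constructor
  · intro hx
    rw [show ({u, v, w} : Set V) = insert u {v, w} from rfl,
      Submodule.mem_span_insert] at hx
    obtain ⟨a, z, hz, rfl⟩ := hx
    obtain ⟨b, c, rfl⟩ := Submodule.mem_span_pair.mp hz
    exact ⟨a, b, c, by abel⟩
  · rintro ⟨a, b, c, rfl⟩
    have hu : u ∈ Submodule.span F ({u, v, w} : Set V) := Submodule.subset_span (by simp)
    have hv : v ∈ Submodule.span F ({u, v, w} : Set V) := Submodule.subset_span (by simp)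
    have hw : w ∈ Submodule.span F ({u, v, w} : Set V) := Submodule.subset_span (by simp)
    exact Submodule.add_mem _ (Submodule.add_mem _ (Submodule.smul_mem _ a hu)
      (Submodule.smul_mem _ b hv)) (Submodule.smul_mem _ c hw)

private lemma span_triple_eq_range (u v w : V) : (Submodule.span F {u, v, w}) =
    Submodule.span F (Set.range ![u, v, w]) := by
  congr 1
  ext x
  simp only [Set.mem_range, Set.mem_insert_iff, Set.mem_singleton_iff]
  constructor
  · rintro (rfl | rfl | rfl)
    exacts [⟨0, rfl⟩, ⟨1, rfl⟩, ⟨2, rfl⟩]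
  · rintro ⟨i, rfl⟩
    fin_cases i <;> simp

private lemma triple_rank_nondeg {B : LinearMap.BilinForm F V} {u v w : V}
    (htest : ∀ a b c : F, B (a • u + b • v + c • w) u = 0 →
      B (a • u + b • v + c • w) v = 0 →
      B (a • u + b • v + c • w) w = 0 → a = 0 ∧ b = 0 ∧ c = 0) :
    finrank F (Submodule.span F ({u, v, w} : Set V)) = 3 ∧
    (B.restrict (Submodule.span F ({u, v, w} : Set V))).Nondegenerate := by
  constructor
  · have hli : LinearIndependent F ![u, v, w] := by
      rw [Fintype.linearIndependent_iff]
      intro g hg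
      have hmem : g 0 • u + g 1 • v + g 2 • w = 0 := by
        simpa [Fin.sum_univ_three] using hg
      have h0 : B (g 0 • u + g 1 • v + g 2 • w) u = 0 := by rw [hmem]; simp
      have h1 : B (g 0 • u + g 1 • v + g 2 • w) v = 0 := by rw [hmem]; simp
      have h2 : B (g 0 • u + g 1 • v + g 2 • w) w = 0 := by rw [hmem]; simp
      obtain ⟨ha, hb, hc⟩ := htest _ _ _ h0 h1 h2
      intro i; fin_cases i <;> assumption
    rw [span_triple_eq_range, finrank_span_eq_card hli]
    simp
  · haveI := FiniteDimensional.span_of_finite F (Set.toFinite ({u, v, w} : Set V))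
    refine LinearMap.BilinForm.Nondegenerate.ofSeparatingLeft ?_
    intro m hm
    obtain ⟨a, b, c, hrep⟩ := mem_span_triple.mp m.2
    have hu : u ∈ Submodule.span F ({u, v, w} : Set V) := Submodule.subset_span (by simp)
    have hv : v ∈ Submodule.span F ({u, v, w} : Set V) := Submodule.subset_span (by simp)
    have hw : w ∈ Submodule.span F ({u, v, w} : Set V) := Submodule.subset_span (by simp)
    have h0 : B (m : V) u = 0 := hm ⟨u, hu⟩
    have h1 : B (m : V) v = 0 := hm ⟨v, hv⟩
    have h2 : B (m : V) w = 0 := hm ⟨w, hw⟩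
    rw [hrep] at h0 h1 h2
    obtain ⟨ha, hb, hc⟩ := htest _ _ _ h0 h1 h2
    ext
    rw [hrep]
    simp [ha, hb, hc]

private lemma exists_sol {F : Type*} [Field F] [Fintype F] (hF : ringChar F ≠ 2)
    {a b : F} (ha : a ≠ 0) (hb : b ≠ 0) (m : F) :
    ∃ x y : F, a * x ^ 2 + b * y ^ 2 = m := by
  obtain ⟨x, y, hxy⟩ := FiniteField.exists_root_sum_quadratic
    (f := C a * X ^ 2 + C 0 * X + C (-m)) (g := C b * X ^ 2 + C 0 * X + C 0)
    (Polynomial.degree_quadratic ha) (Polynomial.degree_quadratic hb)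
    (FiniteField.odd_card_of_char_ne_two hF)
  simp only [eval_add, eval_mul, eval_pow, eval_C, eval_X] at hxy
  exact ⟨x, y, by linear_combination hxy⟩

variable [Fintype F]

private lemma exists_self_eq_of_nondeg (hF : ringChar F ≠ 2)
    {M : Type*} [AddCommGroup M] [Module F M] [FiniteDimensional F M]
    (B : LinearMap.BilinForm F M) (hs : B.IsSymm) (hnd : B.Nondegenerate)
    (h2 : 2 ≤ finrank F M) (m : F) : ∃ x : M, B x x = m := by
  have : Invertible (2 : F) := invertibleOfNonzero (two_ne_zero_of_ringChar hF)
  obtain ⟨b, hb⟩ := LinearMap.BilinForm.exists_orthogonal_basis (LinearMap.BilinForm.isSymm_iff.mp hs)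
  have key : ∀ i, B (b i) (b i) ≠ 0 := by
    intro i hi
    have hz : ∀ y, B (b i) y = 0 := by
      intro y
      have hy := b.sum_repr y
      rw [← hy, map_sum]
      refine Finset.sum_eq_zero fun j _ => ?_
      rcases eq_or_ne i j with rfl | hij
      · simp [hi]
      · have : B (b i) (b j) = 0 := hb hij
        rw [map_smul, this, smul_zero]
    exact b.ne_zero i (hnd.1 _ hz)
  have h0 : (0 : ℕ) < finrank F M := by omega
  have h1 : (1 : ℕ) < finrank F M := by omega
  set i0 : Fin (finrank F M) := ⟨0, h0⟩ with hi0
  set i1 : Fin (finrank F M) := ⟨1, h1⟩ with hi1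
  have hne : i0 ≠ i1 := by simp [hi0, hi1, Fin.ext_iff]
  obtain ⟨x, y, hxy⟩ := exists_sol hF (key i0) (key i1) m
  refine ⟨x • b i0 + y • b i1, ?_⟩
  have hio : B (b i0) (b i1) = 0 := hb hne
  have hio' : B (b i1) (b i0) = 0 := hb hne.symm
  simp only [map_add, map_smul, LinearMap.add_apply, LinearMap.smul_apply, smul_eq_mul,
    hio, hio']
  linear_combination hxy

private lemma restrict_isSymm (B : LinearMap.BilinForm F V) (hs : B.IsSymm)
    (W : Submodule F V) : (B.restrict W).IsSymm := by
  refine ⟨fun x y => ?_⟩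
  simpa using hs.eq (x : V) (y : V)

private lemma exists_mem_self_eq (hF : ringChar F ≠ 2) [FiniteDimensional F V]
    {B : LinearMap.BilinForm F V} (hs : B.IsSymm) {W : Submodule F V}
    (hnd : (B.restrict W).Nondegenerate) (h2 : 2 ≤ finrank F W) (m : F) :
    ∃ x ∈ W, B x x = m := by
  obtain ⟨x, hx⟩ := exists_self_eq_of_nondeg hF (B.restrict W)
    (restrict_isSymm B hs W) hnd h2 m
  exact ⟨x, x.2, by simpa using hx⟩

private lemma exists_ortho_in_3space (hF : ringChar F ≠ 2) [FiniteDimensional F V]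
    {B : LinearMap.BilinForm F V} (hs : B.IsSymm) {T : Submodule F V}
    (hTnd : (B.restrict T).Nondegenerate) (hT3 : finrank F T = 3)
    {x : V} (hx : x ∈ T) (hxx : B x x ≠ 0) (m : F) :
    ∃ z ∈ T, B x z = 0 ∧ B z z = m := by
  classical
  set P : Submodule F V := T ⊓ LinearMap.ker (B x) with hP
  have hPT : P ≤ T := inf_le_left
  have hmemP : ∀ y, y ∈ P ↔ y ∈ T ∧ B x y = 0 := by
    intro y; simp [hP, LinearMap.mem_ker]
  have hrank : finrank F P = 2 := by
    have hsurj : LinearMap.range ((B x).domRestrict T) = ⊤ := by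
      rw [LinearMap.range_eq_top]
      intro c
      refine ⟨(c / B x x) • ⟨x, hx⟩, ?_⟩
      simp [LinearMap.domRestrict_apply, smul_eq_mul]
      field_simp
    have hrn := LinearMap.finrank_range_add_finrank_ker ((B x).domRestrict T)
    rw [hsurj, finrank_top] at hrn
    have hker : LinearMap.ker ((B x).domRestrict T)
        = Submodule.comap T.subtype (LinearMap.ker (B x)) := by
      ext y; simp [LinearMap.mem_ker]
    have hcomap : Submodule.comap T.subtype (LinearMap.ker (B x))
        = Submodule.comap T.subtype P := by
      ext ⟨y, hy⟩
      simp [hP, hy]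
    have hequiv : (Submodule.comap T.subtype P) ≃ₗ[F] P :=
      Submodule.comapSubtypeEquivOfLe hPT
    have heq : finrank F (LinearMap.ker ((B x).domRestrict T)) = finrank F P := by
      rw [hker, hcomap]; exact hequiv.finrank_eq
    rw [heq] at hrn
    have hF1 : finrank F F = 1 := finrank_self F
    omega
  have hPnd : (B.restrict P).Nondegenerate := by
    refine LinearMap.BilinForm.Nondegenerate.ofSeparatingLeft ?_
    intro y hy
    have hyP : ∀ z ∈ P, B (y : V) z = 0 := by
      intro z hz
      exact hy ⟨z, hz⟩
    have hyT : ∀ t ∈ T, B (y : V) t = 0 := by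
      intro t ht
      have hdecomp : t - (B x t / B x x) • x ∈ P := by
        rw [hmemP]
        constructor
        · exact Submodule.sub_mem T ht (Submodule.smul_mem T _ hx)
        · simp [map_sub, map_smul, smul_eq_mul]
          field_simp
          ring
      have h1 : B (y : V) (t - (B x t / B x x) • x) = 0 := hyP _ hdecomp
      have h2 : B (y : V) x = 0 := by
        have h4 := (hmemP (y : V)).mp y.2
        have h3 : B x (y : V) = 0 := h4.2
        rw [← hs.eq x (y : V), h3]
      rw [map_sub, map_smul] at h1
      rw [h2] at h1
      simpa using h1
    have h5 : (⟨(y : V), hPT y.2⟩ : T) = 0 := hTnd.1 ⟨(y : V), hPT y.2⟩ (fun t => hyT t t.2)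
    ext
    simpa using congrArg Subtype.val h5
  obtain ⟨z, hzP, hzz⟩ := exists_mem_self_eq hF hs hPnd (by omega) m
  exact ⟨z, hPT hzP, ((hmemP z).mp hzP).2, hzz⟩

private lemma restrict_orthogonal_nondeg [FiniteDimensional F V]
    {B : LinearMap.BilinForm F V} (hB : B.Nondegenerate) (hsymm : B.IsSymm)
    {U : Submodule F V} (hU : (B.restrict U).Nondegenerate) :
    (B.restrict (B.orthogonal U)).Nondegenerate := by
  refine LinearMap.BilinForm.Nondegenerate.ofSeparatingLeft ?_
  intro m hm
  have hcompl := LinearMap.BilinForm.isCompl_orthogonal_of_restrict_nondegenerate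
    hsymm.isRefl hU
  have hz : ∀ y, B (m : V) y = 0 := by
    intro y
    have hy : y ∈ U ⊔ B.orthogonal U := by
      rw [hcompl.sup_eq_top]; exact Submodule.mem_top
    obtain ⟨u, hu, u', hu', rfl⟩ := Submodule.mem_sup.mp hy
    have h1 : B (m : V) u = 0 := by
      have h6 := m.2
      rw [LinearMap.BilinForm.mem_orthogonal_iff] at h6
      have h2 : B u (m : V) = 0 := h6 u hu
      rw [← hsymm.eq u (m : V), h2]
    have h2 : B (m : V) u' = 0 := hm ⟨u', hu'⟩
    rw [map_add, h1, h2, add_zero]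
  exact Subtype.ext (hB.1 _ hz)

private lemma wrapup (hF : ringChar F ≠ 2) [FiniteDimensional F V]
    {B : LinearMap.BilinForm F V} (hsymm : B.IsSymm)
    {ν : F} (hν : ¬ IsSquare ν)
    {T l : Submodule F V} (hTnd : (B.restrict T).Nondegenerate) (hT3 : finrank F T = 3)
    {p p' : V} (hp : B p p ≠ 0) (hpT : p ∈ T) (hl : IsEllipticLine B l) (hp'l : p' ∈ l)
    (hpl : p ∉ l) (hlT : l ≤ T) :
    ∃ l : Submodule F V, IsEllipticLine B l ∧ p' ∈ l ∧
      finrank F (Submodule.span F {p} ⊔ l : Submodule F V) = 3 ∧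
      (B.restrict (Submodule.span F {p} ⊔ l)).Nondegenerate ∧
      ∃ l' : Submodule F V, IsEllipticLine B l' ∧ p ∈ l' ∧
        finrank F (l' ⊓ l : Submodule F V) = 1 ∧
        (B.restrict (l' ⊓ l)).Nondegenerate := by
  have hsupT : Submodule.span F {p} ⊔ l = T := by
    have hle : Submodule.span F {p} ⊔ l ≤ T := by
      refine sup_le ?_ hlT
      rw [Submodule.span_le, Set.singleton_subset_iff]; exact hpT
    have hlt : l < Submodule.span F {p} ⊔ l := by
      refine lt_of_le_of_ne le_sup_right fun h => hpl ?_
      rw [h]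
      exact Submodule.mem_sup_left (Submodule.mem_span_singleton_self p)
    have h3 : 3 ≤ finrank F (Submodule.span F {p} ⊔ l : Submodule F V) := by
      have h1 := Submodule.finrank_lt_finrank_of_lt hlt
      have h2 := hl.1
      omega
    exact Submodule.eq_of_le_of_finrank_le hle (by omega)
  obtain ⟨z', hz'T, hpz', hz'z'⟩ := exists_ortho_in_3space hF hsymm hTnd hT3 hpT hp
    (-(B p p) * ν)
  have hell' : ¬ IsSquare (-(B p p * B z' z')) := by
    have heq : -(B p p * B z' z') = (B p p) ^ 2 * ν := by rw [hz'z']; ring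
    rw [heq]
    exact nonsquare_sq_mul hν hp
  set l' : Submodule F V := Submodule.span F {p, z'} with hl'def
  have hl' : IsEllipticLine B l' := isEllipticLine_span_pair hsymm hpz' hell'
  have hpl' : p ∈ l' := Submodule.subset_span (by simp)
  have hl'T : l' ≤ T := by
    rw [hl'def, Submodule.span_le]
    rintro x (rfl | rfl)
    · exact hpT
    · exact hz'T
  have hsup3 : finrank F (l' ⊔ l : Submodule F V) = 3 := by
    have hle : l' ⊔ l ≤ T := sup_le hl'T hlT
    have hlt : l < l' ⊔ l := by
      refine lt_of_le_of_ne le_sup_right fun h => hpl ?_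
      rw [h]
      exact Submodule.mem_sup_left hpl'
    have h1 := Submodule.finrank_lt_finrank_of_lt hlt
    have h2 := hl.1
    have h3 : finrank F (l' ⊔ l : Submodule F V) ≤ 3 := hT3 ▸ Submodule.finrank_mono hle
    omega
  have hinf1 : finrank F (l' ⊓ l : Submodule F V) = 1 := by
    have h0 := Submodule.finrank_sup_add_finrank_inf_eq l' l
    have h1 := hl.1
    have h2 := hl'.1
    omega
  have hinfnd : (B.restrict (l' ⊓ l)).Nondegenerate := by
    refine LinearMap.BilinForm.Nondegenerate.ofSeparatingLeft ?_
    intro m hm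
    have hself : B (m : V) (m : V) = 0 := by simpa using hm m
    have h7 : (m : V) = 0 := hl.2.2 _ (inf_le_right (α := Submodule F V) m.2) hself
    exact Subtype.ext h7
  refine ⟨l, hl, hp'l, ?_, ?_, l', hl', hpl', hinf1, hinfnd⟩
  · rw [hsupT]; exact hT3
  · rw [hsupT]; exact hTnd

end EllipticHelpers

/-- The graph whose vertices are the nondegenerate points and whose edges are the
pairs of points lying together on an elliptic line. -/
def ellipticCollinearityGraph {F V : Type*} [Field F] [AddCommGroup V] [Module F V]
    (B : LinearMap.BilinForm F V) :
    SimpleGraph {P : Submodule F V // finrank F P = 1 ∧ (B.restrict P).Nondegenerate} where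
  Adj P Q := P ≠ Q ∧ IsEllipticLine B (P.1 ⊔ Q.1)
  symm := by
    constructor
    rintro P Q ⟨hne, he⟩
    exact ⟨hne.symm, by rwa [sup_comm]⟩
  loopless := by constructor; rintro P ⟨hne, -⟩; exact hne rfl


section KeyLemma

open Module

variable {F V : Type*} [Field F] [Fintype F] [AddCommGroup V] [Module F V]

set_option maxHeartbeats 1000000 in
private lemma key_existence (hF : ringChar F ≠ 2) [FiniteDimensional F V]
    (n : ℕ) (hn : 5 ≤ n + 1) (hdim : finrank F V = n + 1)
    {B : LinearMap.BilinForm F V} (hsymm : B.IsSymm) (hB : B.Nondegenerate)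
    {p p' : V} (hp : B p p ≠ 0) (hp' : B p' p' ≠ 0)
    (hne : Submodule.span F {p} ≠ Submodule.span F {p'}) :
    ∃ l : Submodule F V, IsEllipticLine B l ∧ p' ∈ l ∧
      finrank F (Submodule.span F {p} ⊔ l : Submodule F V) = 3 ∧
      (B.restrict (Submodule.span F {p} ⊔ l)).Nondegenerate ∧
      ∃ l' : Submodule F V, IsEllipticLine B l' ∧ p ∈ l' ∧
        finrank F (l' ⊓ l : Submodule F V) = 1 ∧
        (B.restrict (l' ⊓ l)).Nondegenerate := by
  obtain ⟨ν, hν⟩ := FiniteField.exists_nonsquare hF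
  have hν0 : ν ≠ 0 := fun h => hν (h ▸ ⟨0, by ring⟩)
  have h2F : (2 : F) ≠ 0 := two_ne_zero_of_ringChar hF
  have hp0 : p ≠ 0 := fun h => hp (by simp [h])
  have hp'0 : p' ≠ 0 := fun h => hp' (by simp [h])
  have hpnotin : p ∉ Submodule.span F ({p'} : Set V) := by
    intro hmem
    apply hne
    refine Submodule.eq_of_le_of_finrank_le ?_ ?_
    · rwa [Submodule.span_le, Set.singleton_subset_iff]
    · rw [finrank_span_singleton hp0, finrank_span_singleton hp'0]
  set c := B p p with hc
  set c' := B p' p' with hc'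
  set f := B p p' with hf
  have hf' : B p' p = f := by rw [← hsymm.eq p p']
  set Δ := c * c' - f ^ 2 with hΔdef
  set z₀ : V := c' • p - f • p' with hz₀def
  have hz₀p' : B z₀ p' = 0 := by
    simp only [hz₀def, map_sub, map_smul, LinearMap.sub_apply, LinearMap.smul_apply,
      smul_eq_mul, hf', ← hc']
    ring
  have hp'z₀ : B p' z₀ = 0 := by
    simp only [hz₀def, map_sub, map_smul, smul_eq_mul, hf', ← hc', ← hf]
    ring
  have hz₀p : B z₀ p = Δ := by
    simp only [hz₀def, map_sub, map_smul, LinearMap.sub_apply, LinearMap.smul_apply,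
      smul_eq_mul, hf', ← hc, hΔdef]
    ring
  have hpz₀ : B p z₀ = Δ := by
    simp only [hz₀def, map_sub, map_smul, smul_eq_mul, ← hc, ← hf, hΔdef]
    ring
  have hz₀z₀ : B z₀ z₀ = c' * Δ := by
    simp only [hz₀def, map_sub, map_smul, LinearMap.sub_apply, LinearMap.smul_apply,
      smul_eq_mul, hf', ← hc, ← hc', ← hf, hΔdef]
    ring
  have hz₀0 : z₀ ≠ 0 := by
    intro h
    apply hpnotin
    have : c' • p = f • p' := by
      have := sub_eq_zero.mp (hz₀def ▸ h)
      exact this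
    have hrep : p = (f / c') • p' := by
      rw [div_eq_mul_inv, mul_comm, mul_smul]
      rw [← this]
      rw [smul_smul, inv_mul_cancel₀ hp', one_smul]
    rw [hrep]
    exact Submodule.smul_mem _ _ (Submodule.mem_span_singleton_self p')
  have hprecover : p = (c')⁻¹ • (z₀ + f • p') := by
    rw [hz₀def]
    rw [sub_add_cancel]
    rw [smul_smul, inv_mul_cancel₀ hp', one_smul]
  by_cases hΔ : Δ = 0
  · -- degenerate case: hyperbolic construction
    have hz₀z₀' : B z₀ z₀ = 0 := by rw [hz₀z₀, hΔ, mul_zero]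
    have hex : ∃ w₀, B z₀ w₀ ≠ 0 := by
      by_contra h
      push_neg at h
      exact hz₀0 (hB.1 z₀ h)
    obtain ⟨w₀, hw₀⟩ := hex
    set w₁ : V := c' • w₀ - (B p' w₀) • p' with hw₁def
    have hp'w₁ : B p' w₁ = 0 := by
      simp only [hw₁def, map_sub, map_smul, smul_eq_mul, ← hc']
      ring
    have hz₀w₁ : B z₀ w₁ = c' * B z₀ w₀ := by
      simp only [hw₁def, map_sub, map_smul, smul_eq_mul, hz₀p']
      ring
    set e₁ := c' * B z₀ w₀ with he₁def
    have he₁ : e₁ ≠ 0 := mul_ne_zero hp' hw₀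
    have hw₁z₀ : B w₁ z₀ = e₁ := by rw [bsymm hsymm z₀ w₁, hz₀w₁]
    set w' : V := w₁ - (B w₁ w₁ / (2 * e₁)) • z₀ with hw'def
    have hp'w' : B p' w' = 0 := by
      simp only [hw'def, map_sub, map_smul, smul_eq_mul, hp'w₁, hp'z₀]
      ring
    have hw'p' : B w' p' = 0 := by rw [bsymm hsymm p' w', hp'w']
    have hz₀w' : B z₀ w' = e₁ := by
      simp only [hw'def, map_sub, map_smul, smul_eq_mul, hz₀w₁, ← he₁def, hz₀z₀']
      ring
    have hw'z₀ : B w' z₀ = e₁ := by rw [bsymm hsymm z₀ w', hz₀w']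
    have hw'w' : B w' w' = 0 := by
      simp only [hw'def, map_sub, map_smul, LinearMap.sub_apply, LinearMap.smul_apply,
        smul_eq_mul, hw₁z₀, hz₀w₁, ← he₁def, hz₀z₀']
      field_simp
      ring
    set t := (-c' * ν) / (2 * e₁) with htdef
    have ht : t ≠ 0 := div_ne_zero
      (mul_ne_zero (neg_ne_zero.mpr hp') hν0) (mul_ne_zero h2F he₁)
    set z₁ : V := z₀ + t • w' with hz₁def
    have hp'z₁ : B p' z₁ = 0 := by
      simp only [hz₁def, map_add, map_smul, smul_eq_mul, hp'z₀, hp'w']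
      ring
    have hz₁z₁ : B z₁ z₁ = -c' * ν := by
      have expand : B z₁ z₁ = 2 * t * e₁ := by
        simp only [hz₁def, map_add, map_smul, LinearMap.add_apply, LinearMap.smul_apply,
          smul_eq_mul, hz₀z₀', hz₀w', hw'z₀, hw'w']
        ring
      rw [expand, htdef]
      field_simp
    have helll : ¬ IsSquare (-(B p' p' * B z₁ z₁)) := by
      have heq : -(B p' p' * B z₁ z₁) = c' ^ 2 * ν := by
        rw [hz₁z₁, ← hc']; ring
      rw [heq]
      exact nonsquare_sq_mul hν hp'
    have hl : IsEllipticLine B (Submodule.span F {p', z₁}) :=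
      isEllipticLine_span_pair hsymm hp'z₁ helll
    have htest : ∀ a b cc : F, B (a • p' + b • z₀ + cc • w') p' = 0 →
        B (a • p' + b • z₀ + cc • w') z₀ = 0 →
        B (a • p' + b • z₀ + cc • w') w' = 0 → a = 0 ∧ b = 0 ∧ cc = 0 := by
      intro a b cc h0 h1 h2
      simp only [map_add, map_smul, LinearMap.add_apply, LinearMap.smul_apply, smul_eq_mul,
        hz₀p', hw'p', hp'z₀, hz₀z₀', hw'z₀, hp'w', hz₀w', hw'w', ← hc'] at h0 h1 h2
      have ha : a = 0 := by
        have : a * c' = 0 := by linear_combination h0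
        exact (mul_eq_zero.mp this).resolve_right hp'
      have hcc : cc = 0 := by
        have : cc * e₁ = 0 := by linear_combination h1
        exact (mul_eq_zero.mp this).resolve_right he₁
      have hb : b = 0 := by
        have : b * e₁ = 0 := by linear_combination h2
        exact (mul_eq_zero.mp this).resolve_right he₁
      exact ⟨ha, hb, hcc⟩
    obtain ⟨hT3, hTnd⟩ := triple_rank_nondeg (B := B) (u := p') (v := z₀) (w := w') htest
    have hp'T : p' ∈ Submodule.span F ({p', z₀, w'} : Set V) :=
      Submodule.subset_span (by simp)
    have hz₀T : z₀ ∈ Submodule.span F ({p', z₀, w'} : Set V) :=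
      Submodule.subset_span (by simp)
    have hw'T : w' ∈ Submodule.span F ({p', z₀, w'} : Set V) :=
      Submodule.subset_span (by simp)
    have hpT : p ∈ Submodule.span F ({p', z₀, w'} : Set V) := by
      rw [hprecover]
      exact Submodule.smul_mem _ _
        (Submodule.add_mem _ hz₀T (Submodule.smul_mem _ _ hp'T))
    have hz₁T : z₁ ∈ Submodule.span F ({p', z₀, w'} : Set V) := by
      rw [hz₁def]
      exact Submodule.add_mem _ hz₀T (Submodule.smul_mem _ _ hw'T)
    have hlT : Submodule.span F {p', z₁} ≤ Submodule.span F ({p', z₀, w'} : Set V) := by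
      rw [Submodule.span_le]
      rintro x (rfl | rfl)
      · exact hp'T
      · exact hz₁T
    have hpl : p ∉ Submodule.span F ({p', z₁} : Set V) := by
      intro hmem
      have hz₀mem : z₀ ∈ Submodule.span F ({p', z₁} : Set V) := by
        rw [hz₀def]
        exact Submodule.sub_mem _ (Submodule.smul_mem _ _ hmem)
          (Submodule.smul_mem _ _ (Submodule.subset_span (by simp)))
      obtain ⟨s, u, hsu⟩ := Submodule.mem_span_pair.mp hz₀mem
      have hz₁w' : B z₁ w' = e₁ := by
        simp only [hz₁def, map_add, map_smul, LinearMap.add_apply, LinearMap.smul_apply,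
          smul_eq_mul, hz₀w', hw'w']
        ring
      have hz₁z₀ : B z₁ z₀ = t * e₁ := by
        simp only [hz₁def, map_add, map_smul, LinearMap.add_apply, LinearMap.smul_apply,
          smul_eq_mul, hz₀z₀', hw'z₀]
        ring
      have e2 : u * e₁ = e₁ := by
        have := congrArg (fun x => B x w') hsu
        simpa only [map_add, map_smul, LinearMap.add_apply, LinearMap.smul_apply,
          smul_eq_mul, hp'w', hz₁w', hz₀w', mul_zero, zero_add] using this
      have e3 : u * (t * e₁) = 0 := by
        have := congrArg (fun x => B x z₀) hsu
        simpa only [map_add, map_smul, LinearMap.add_apply, LinearMap.smul_apply,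
          smul_eq_mul, hp'z₀, hz₁z₀, hz₀z₀', mul_zero, zero_add] using this
      have hu1 : u = 1 := by
        have hsub : (u - 1) * e₁ = 0 := by linear_combination e2
        rcases mul_eq_zero.mp hsub with h | h
        · exact sub_eq_zero.mp h
        · exact absurd h he₁
      rw [hu1, one_mul] at e3
      rcases mul_eq_zero.mp e3 with h | h
      · exact ht h
      · exact he₁ h
    exact wrapup hF hsymm hν hTnd hT3 hp hpT hl (Submodule.subset_span (by simp)) hpl hlT
  · -- nondegenerate span {p, p'}
    have hcΔ : c' * Δ ≠ 0 := mul_ne_zero hp' hΔ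
    set U : Submodule F V := Submodule.span F {p, p'} with hUdef
    have hpU : p ∈ U := Submodule.subset_span (by simp)
    have hp'U : p' ∈ U := Submodule.subset_span (by simp)
    have hz₀U : z₀ ∈ U := by
      rw [hz₀def]
      exact Submodule.sub_mem _ (Submodule.smul_mem _ _ hpU) (Submodule.smul_mem _ _ hp'U)
    have hUnd : (B.restrict U).Nondegenerate := by
      refine LinearMap.BilinForm.Nondegenerate.ofSeparatingLeft ?_
      intro m hm
      obtain ⟨a, b, hab⟩ := Submodule.mem_span_pair.mp m.2
      have e1 : B (m : V) p = 0 := hm ⟨p, hpU⟩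
      have e2 : B (m : V) p' = 0 := hm ⟨p', hp'U⟩
      rw [← hab] at e1 e2
      simp only [map_add, map_smul, LinearMap.add_apply, LinearMap.smul_apply,
        smul_eq_mul, ← hc, ← hc', ← hf, hf'] at e1 e2
      have ha : a = 0 := by
        have h9 : a * Δ = 0 := by rw [hΔdef]; linear_combination c' * e1 - f * e2
        exact (mul_eq_zero.mp h9).resolve_right hΔ
      have hb : b = 0 := by
        have h9 : b * Δ = 0 := by rw [hΔdef]; linear_combination c * e2 - f * e1
        exact (mul_eq_zero.mp h9).resolve_right hΔ
      ext
      rw [← hab]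
      simp [ha, hb]
    have hU2 : finrank F U = 2 := by
      have hli : LinearIndependent F ![p, p'] := by
        rw [Fintype.linearIndependent_iff]
        intro g hg
        have hmem : g 0 • p + g 1 • p' = 0 := by simpa [Fin.sum_univ_two] using hg
        have e1 : B (g 0 • p + g 1 • p') p = 0 := by rw [hmem]; simp
        have e2 : B (g 0 • p + g 1 • p') p' = 0 := by rw [hmem]; simp
        simp only [map_add, map_smul, LinearMap.add_apply, LinearMap.smul_apply,
          smul_eq_mul, ← hc, ← hc', ← hf, hf'] at e1 e2
        have h0 : g 0 = 0 := by
          have h9 : g 0 * Δ = 0 := by rw [hΔdef]; linear_combination c' * e1 - f * e2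
          exact (mul_eq_zero.mp h9).resolve_right hΔ
        have h1 : g 1 = 0 := by
          have h9 : g 1 * Δ = 0 := by rw [hΔdef]; linear_combination c * e2 - f * e1
          exact (mul_eq_zero.mp h9).resolve_right hΔ
        intro i; fin_cases i <;> assumption
      rw [hUdef, span_pair_eq_range, finrank_span_eq_card hli]
      simp
    have hWrank : finrank F (B.orthogonal U) = n + 1 - 2 := by
      rw [LinearMap.BilinForm.finrank_orthogonal hB U, hdim, hU2]
    have hWnd := restrict_orthogonal_nondeg hB hsymm hUnd
    have hm0 : -(c' * Δ) * ν ≠ 0 := mul_ne_zero (neg_ne_zero.mpr hcΔ) hν0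
    obtain ⟨w, hwW, hww⟩ := exists_mem_self_eq hF hsymm hWnd
      (by rw [hWrank]; omega) (-(c' * Δ) * ν)
    rw [LinearMap.BilinForm.mem_orthogonal_iff] at hwW
    have hpw : B p w = 0 := hwW p hpU
    have hp'w : B p' w = 0 := hwW p' hp'U
    have hwp : B w p = 0 := by rw [bsymm hsymm p w, hpw]
    have hwp' : B w p' = 0 := by rw [bsymm hsymm p' w, hp'w]
    have hz₀w : B z₀ w = 0 := by
      simp only [hz₀def, map_sub, map_smul, LinearMap.sub_apply, LinearMap.smul_apply,
        smul_eq_mul, hpw, hp'w]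
      ring
    have hwz₀ : B w z₀ = 0 := by rw [bsymm hsymm z₀ w, hz₀w]
    have hwU : w ∉ U := by
      intro hmem
      have hwzero : (⟨w, hmem⟩ : U) = 0 := by
        refine hUnd.1 ⟨w, hmem⟩ fun nn => ?_
        obtain ⟨a, b, hab⟩ := Submodule.mem_span_pair.mp nn.2
        show B w (nn : V) = 0
        rw [← hab]
        simp only [map_add, map_smul, smul_eq_mul, hwp, hwp']
        ring
      have : w = 0 := by simpa using congrArg Subtype.val hwzero
      rw [this] at hww
      simp only [map_zero, LinearMap.zero_apply] at hww
      exact hm0 hww.symm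
    obtain ⟨x, y, hxy⟩ := exists_sol hF hcΔ hm0 (-c' * ν)
    have hm₁0 : -c' * ν ≠ 0 := mul_ne_zero (neg_ne_zero.mpr hp') hν0
    set z₁ : V := x • z₀ + y • w with hz₁def
    have hBz₁ : B z₁ z₁ = -c' * ν := by
      rw [hz₁def, bilin_self_expand B hsymm x y hz₀w, hz₀z₀, hww]
      linear_combination hxy
    have hp'z₁ : B p' z₁ = 0 := by
      simp only [hz₁def, map_add, map_smul, smul_eq_mul, hp'z₀, hp'w]
      ring
    set z₁' : V := ((-(c' * Δ) * ν) * y) • z₀ + (-((c' * Δ) * x)) • w with hz₁'def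
    have hz₁z₁' : B z₁ z₁' = 0 := by
      simp only [hz₁def, hz₁'def, map_add, map_smul, LinearMap.add_apply,
        LinearMap.smul_apply, smul_eq_mul, hz₀z₀, hz₀w, hwz₀, hww]
      ring
    have hz₁'z₁ : B z₁' z₁ = 0 := by rw [bsymm hsymm z₁ z₁', hz₁z₁']
    set ρ : F := (c' * Δ) * (-(c' * Δ) * ν) with hρdef
    have hz₁'z₁' : B z₁' z₁' = ρ * (-c' * ν) := by
      rw [hz₁'def, bilin_self_expand B hsymm _ _ hz₀w, hz₀z₀, hww, hρdef]
      linear_combination ((c' * Δ) * (-(c' * Δ) * ν)) * hxy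
    have hρnot : ¬ IsSquare (-ρ) := by
      have heq : -ρ = (c' * Δ) ^ 2 * ν := by rw [hρdef]; ring
      rw [heq]
      exact nonsquare_sq_mul hν hcΔ
    have hρne1 : ρ ≠ -1 := by
      intro h
      exact hρnot ⟨1, by rw [h]; ring⟩
    have hk : ρ + 1 ≠ 0 := by
      intro h
      exact hρne1 (by linear_combination h)
    set z₂ : V := (ρ - 1) • z₁ + (2 : F) • z₁' with hz₂def
    have hBz₂ : B z₂ z₂ = (-c' * ν) * (ρ + 1) ^ 2 := by
      simp only [hz₂def, map_add, map_smul, LinearMap.add_apply, LinearMap.smul_apply,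
        smul_eq_mul, hBz₁, hz₁z₁', hz₁'z₁, hz₁'z₁']
      ring
    have hz₁'p' : B p' z₁' = 0 := by
      simp only [hz₁'def, map_add, map_smul, smul_eq_mul, hp'z₀, hp'w]
      ring
    have hp'z₂ : B p' z₂ = 0 := by
      simp only [hz₂def, map_add, map_smul, smul_eq_mul, hp'z₁, hz₁'p']
      ring
    have hell1 : ¬ IsSquare (-(B p' p' * B z₁ z₁)) := by
      have heq : -(B p' p' * B z₁ z₁) = c' ^ 2 * ν := by rw [hBz₁, ← hc']; ring
      rw [heq]
      exact nonsquare_sq_mul hν hp'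
    have hell2 : ¬ IsSquare (-(B p' p' * B z₂ z₂)) := by
      have heq : -(B p' p' * B z₂ z₂) = (c' * (ρ + 1)) ^ 2 * ν := by rw [hBz₂, ← hc']; ring
      rw [heq]
      exact nonsquare_sq_mul hν (mul_ne_zero hp' hk)
    have hl₁ : IsEllipticLine B (Submodule.span F {p', z₁}) :=
      isEllipticLine_span_pair hsymm hp'z₁ hell1
    have hl₂ : IsEllipticLine B (Submodule.span F {p', z₂}) :=
      isEllipticLine_span_pair hsymm hp'z₂ hell2
    -- the ambient 3-space
    have htest : ∀ a b cc : F, B (a • p' + b • z₀ + cc • w) p' = 0 →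
        B (a • p' + b • z₀ + cc • w) z₀ = 0 →
        B (a • p' + b • z₀ + cc • w) w = 0 → a = 0 ∧ b = 0 ∧ cc = 0 := by
      intro a b cc h0 h1 h2
      simp only [map_add, map_smul, LinearMap.add_apply, LinearMap.smul_apply, smul_eq_mul,
        hz₀p', hwp', hp'z₀, hz₀z₀, hwz₀, hp'w, hz₀w, hww, ← hc'] at h0 h1 h2
      have ha : a = 0 := by
        have h9 : a * c' = 0 := by linear_combination h0
        exact (mul_eq_zero.mp h9).resolve_right hp'
      have hb : b = 0 := by
        have h9 : b * (c' * Δ) = 0 := by linear_combination h1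
        exact (mul_eq_zero.mp h9).resolve_right hcΔ
      have hcc : cc = 0 := by
        have h9 : cc * (-(c' * Δ) * ν) = 0 := by linear_combination h2
        exact (mul_eq_zero.mp h9).resolve_right hm0
      exact ⟨ha, hb, hcc⟩
    obtain ⟨hT3, hTnd⟩ := triple_rank_nondeg (B := B) (u := p') (v := z₀) (w := w) htest
    have hp'T : p' ∈ Submodule.span F ({p', z₀, w} : Set V) :=
      Submodule.subset_span (by simp)
    have hz₀T : z₀ ∈ Submodule.span F ({p', z₀, w} : Set V) :=
      Submodule.subset_span (by simp)
    have hwT : w ∈ Submodule.span F ({p', z₀, w} : Set V) :=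
      Submodule.subset_span (by simp)
    have hpT : p ∈ Submodule.span F ({p', z₀, w} : Set V) := by
      rw [hprecover]
      exact Submodule.smul_mem _ _
        (Submodule.add_mem _ hz₀T (Submodule.smul_mem _ _ hp'T))
    have hz₁T : z₁ ∈ Submodule.span F ({p', z₀, w} : Set V) := by
      rw [hz₁def]
      exact Submodule.add_mem _ (Submodule.smul_mem _ _ hz₀T) (Submodule.smul_mem _ _ hwT)
    have hz₁'T : z₁' ∈ Submodule.span F ({p', z₀, w} : Set V) := by
      rw [hz₁'def]
      exact Submodule.add_mem _ (Submodule.smul_mem _ _ hz₀T) (Submodule.smul_mem _ _ hwT)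
    have hz₂T : z₂ ∈ Submodule.span F ({p', z₀, w} : Set V) := by
      rw [hz₂def]
      exact Submodule.add_mem _ (Submodule.smul_mem _ _ hz₁T) (Submodule.smul_mem _ _ hz₁'T)
    have hl₁T : Submodule.span F {p', z₁} ≤ Submodule.span F ({p', z₀, w} : Set V) := by
      rw [Submodule.span_le]
      rintro xx (rfl | rfl)
      · exact hp'T
      · exact hz₁T
    have hl₂T : Submodule.span F {p', z₂} ≤ Submodule.span F ({p', z₀, w} : Set V) := by
      rw [Submodule.span_le]
      rintro xx (rfl | rfl)
      · exact hp'T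
      · exact hz₂T
    -- p is not on both candidate lines
    have honeof : p ∉ Submodule.span F ({p', z₁} : Set V) ∨
        p ∉ Submodule.span F ({p', z₂} : Set V) := by
      by_contra hcon
      push_neg at hcon
      obtain ⟨hm1, hm2⟩ := hcon
      have hmemU : ∀ z : V, p ∈ Submodule.span F ({p', z} : Set V) → z ∈ U ∨
          ∃ s : F, p = s • p' := by
        intro z hz
        obtain ⟨s, t', hst⟩ := Submodule.mem_span_pair.mp hz
        rcases eq_or_ne t' 0 with rfl | ht'
        · right
          exact ⟨s, by rw [← hst]; simp⟩
        · left
          have hzeq : z = (t')⁻¹ • (p - s • p') := by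
            rw [← hst, add_sub_cancel_left, smul_smul, inv_mul_cancel₀ ht', one_smul]
          rw [hzeq]
          exact Submodule.smul_mem _ _
            (Submodule.sub_mem _ hpU (Submodule.smul_mem _ _ hp'U))
      have hnotscal : ¬ ∃ s : F, p = s • p' := by
        rintro ⟨s, rfl⟩
        exact hpnotin (Submodule.smul_mem _ _ (Submodule.mem_span_singleton_self p'))
      have hz₁U : z₁ ∈ U := (hmemU z₁ hm1).resolve_right hnotscal
      have hz₂U : z₂ ∈ U := (hmemU z₂ hm2).resolve_right hnotscal
      have hz₁'U : z₁' ∈ U := by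
        have heq2 : (2 : F) • z₁' = z₂ - (ρ - 1) • z₁ := by rw [hz₂def]; abel
        have hmem2 : (2 : F) • z₁' ∈ U := by
          rw [heq2]
          exact Submodule.sub_mem _ hz₂U (Submodule.smul_mem _ _ hz₁U)
        have hsm := Submodule.smul_mem U (2 : F)⁻¹ hmem2
        rwa [smul_smul, inv_mul_cancel₀ h2F, one_smul] at hsm
      have hyw : y • w ∈ U := by
        have heq : y • w = z₁ - x • z₀ := by rw [hz₁def]; abel
        rw [heq]
        exact Submodule.sub_mem _ hz₁U (Submodule.smul_mem _ _ hz₀U)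
      have hy0 : y = 0 := by
        by_contra hy
        refine hwU ?_
        have hsm := Submodule.smul_mem U y⁻¹ hyw
        rwa [smul_smul, inv_mul_cancel₀ hy, one_smul] at hsm
      have hxw : (-((c' * Δ) * x)) • w ∈ U := by
        have heq : (-((c' * Δ) * x)) • w = z₁' - ((-(c' * Δ) * ν) * y) • z₀ := by
          rw [hz₁'def]; abel
        rw [heq]
        exact Submodule.sub_mem _ hz₁'U (Submodule.smul_mem _ _ hz₀U)
      have hx0 : x = 0 := by
        by_contra hx
        have hcoef : -((c' * Δ) * x) ≠ 0 := neg_ne_zero.mpr (mul_ne_zero hcΔ hx)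
        refine hwU ?_
        have hsm := Submodule.smul_mem U (-((c' * Δ) * x))⁻¹ hxw
        rwa [smul_smul, inv_mul_cancel₀ hcoef, one_smul] at hsm
      have hz₁zero : z₁ = 0 := by rw [hz₁def, hx0, hy0]; simp
      rw [hz₁zero] at hBz₁
      simp only [map_zero, LinearMap.zero_apply] at hBz₁
      exact hm₁0 hBz₁.symm
    rcases honeof with hnp | hnp
    · exact wrapup hF hsymm hν hTnd hT3 hp hpT hl₁ (Submodule.subset_span (by simp)) hnp hl₁T
    · exact wrapup hF hsymm hν hTnd hT3 hp hpT hl₂ (Submodule.subset_span (by simp)) hnp hl₂T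

end KeyLemma


section FinalAux

open Module

variable {F V : Type*} [Field F] [AddCommGroup V] [Module F V]

private lemma vertex_gen [FiniteDimensional F V] {B : LinearMap.BilinForm F V}
    {P : Submodule F V} (h1 : finrank F P = 1) (hnd : (B.restrict P).Nondegenerate) :
    ∃ p : V, P = Submodule.span F {p} ∧ B p p ≠ 0 := by
  have hbot : P ≠ ⊥ := by
    intro h
    rw [h, finrank_bot] at h1
    omega
  obtain ⟨p, hpP, hp0⟩ := Submodule.exists_mem_ne_zero_of_ne_bot hbot
  have hspan : Submodule.span F ({p} : Set V) = P := by
    refine Submodule.eq_of_le_of_finrank_le ?_ ?_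
    · rwa [Submodule.span_le, Set.singleton_subset_iff]
    · rw [finrank_span_singleton hp0, h1]
  refine ⟨p, hspan.symm, ?_⟩
  intro hpp
  refine hp0 ?_
  have hz : (⟨p, hpP⟩ : P) = 0 := by
    refine hnd.1 ⟨p, hpP⟩ fun nn => ?_
    have hnn : (nn : V) ∈ Submodule.span F ({p} : Set V) := by
      rw [hspan]; exact nn.2
    obtain ⟨a, ha⟩ := Submodule.mem_span_singleton.mp hnn
    show B p (nn : V) = 0
    rw [← ha, map_smul, smul_eq_mul, hpp, mul_zero]
  simpa using congrArg Subtype.val hz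

private lemma sup_line [FiniteDimensional F V] {P₁ P₂ L : Submodule F V}
    (h1 : finrank F P₁ = 1) (h2 : finrank F P₂ = 1) (hL : finrank F L = 2)
    (hne : P₁ ≠ P₂) (hle1 : P₁ ≤ L) (hle2 : P₂ ≤ L) : P₁ ⊔ P₂ = L := by
  have hsle : P₁ ⊔ P₂ ≤ L := sup_le hle1 hle2
  have hlt : P₁ < P₁ ⊔ P₂ := by
    refine lt_of_le_of_ne le_sup_left fun h => hne ?_
    have hP2le : P₂ ≤ P₁ := h ▸ le_sup_right
    exact (Submodule.eq_of_le_of_finrank_le hP2le (by omega)).symm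
  have h3 := Submodule.finrank_lt_finrank_of_lt hlt
  exact Submodule.eq_of_le_of_finrank_le hsle (by omega)

end FinalAux

/-- Over `F_q` (`q` odd), in an `(n+1)`-dimensional space of plus type with `n+1 ≥ 5`:
for any two distinct nondegenerate points `⟨p⟩`, `⟨p'⟩` there is an elliptic line `l`
through `⟨p'⟩` with `⟨p⟩ + l` a nondegenerate 3-space, and some elliptic line through
`⟨p⟩` meets `l` in a nondegenerate point.  In particular, the graph on nondegenerate
points with adjacency "lying on a common elliptic line" has diameter at most two. -/
theorem elliptic_collinearity_diameter_two
    {F V : Type*} [Field F] [Fintype F] [AddCommGroup V] [Module F V]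
    (q : ℕ) (hq : Fintype.card F = q) (hodd : Odd q)
    (n : ℕ) (hn : 5 ≤ n + 1) (hdim : finrank F V = n + 1)
    (B : LinearMap.BilinForm F V) (hsymm : B.IsSymm) (hB : B.Nondegenerate)
    (hplus : BIsPlusType B) :
    (∀ p p' : V, B p p ≠ 0 → B p' p' ≠ 0 →
      Submodule.span F {p} ≠ Submodule.span F {p'} →
      ∃ l : Submodule F V, IsEllipticLine B l ∧ p' ∈ l ∧
        finrank F (Submodule.span F {p} ⊔ l : Submodule F V) = 3 ∧
        (B.restrict (Submodule.span F {p} ⊔ l)).Nondegenerate ∧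
        ∃ l' : Submodule F V, IsEllipticLine B l' ∧ p ∈ l' ∧
          finrank F (l' ⊓ l : Submodule F V) = 1 ∧
          (B.restrict (l' ⊓ l)).Nondegenerate) ∧
    (ellipticCollinearityGraph B).ediam ≤ 2 := by
  have hq2 : ringChar F ≠ 2 := by
    intro h
    have h0 := FiniteField.even_card_of_char_two h
    rw [hq] at h0
    have h1 := Nat.odd_iff.mp hodd
    omega
  have hFD : FiniteDimensional F V := FiniteDimensional.of_finrank_pos (by rw [hdim]; omega)
  have hfirst : ∀ p p' : V, B p p ≠ 0 → B p' p' ≠ 0 →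
      Submodule.span F {p} ≠ Submodule.span F {p'} →
      ∃ l : Submodule F V, IsEllipticLine B l ∧ p' ∈ l ∧
        finrank F (Submodule.span F {p} ⊔ l : Submodule F V) = 3 ∧
        (B.restrict (Submodule.span F {p} ⊔ l)).Nondegenerate ∧
        ∃ l' : Submodule F V, IsEllipticLine B l' ∧ p ∈ l' ∧
          finrank F (l' ⊓ l : Submodule F V) = 1 ∧
          (B.restrict (l' ⊓ l)).Nondegenerate :=
    fun p p' hp hp' hne => key_existence hq2 n hn hdim hsymm hB hp hp' hne
  refine ⟨hfirst, ?_⟩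
  rw [SimpleGraph.ediam_le_iff]
  intro u v
  rcases eq_or_ne u v with rfl | huv
  · rw [SimpleGraph.edist_self]
    exact zero_le
  obtain ⟨P, hP1, hPnd⟩ := u
  obtain ⟨Q, hQ1, hQnd⟩ := v
  obtain ⟨p, hPspan, hpp⟩ := vertex_gen hP1 hPnd
  obtain ⟨p', hQspan, hp'p'⟩ := vertex_gen hQ1 hQnd
  have hPQ : P ≠ Q := fun h => huv (Subtype.ext h)
  have hspanne : Submodule.span F ({p} : Set V) ≠ Submodule.span F {p'} := by
    rw [← hPspan, ← hQspan]; exact hPQ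
  obtain ⟨l, hl, hp'l, hsup3, hsupnd, l', hl', hpl', hinf1, hinfnd⟩ :=
    hfirst p p' hpp hp'p' hspanne
  have hPle : P ≤ l' := by
    rw [hPspan, Submodule.span_le, Set.singleton_subset_iff]; exact hpl'
  have hQle : Q ≤ l := by
    rw [hQspan, Submodule.span_le, Set.singleton_subset_iff]; exact hp'l
  have hRle' : l' ⊓ l ≤ l' := inf_le_left
  have hRle : l' ⊓ l ≤ l := inf_le_right
  by_cases hPR : P = l' ⊓ l
  · have hPleL : P ≤ l := hPR ▸ hRle
    have hsup : P ⊔ Q = l := sup_line hP1 hQ1 hl.1 hPQ hPleL hQle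
    have hadj : (ellipticCollinearityGraph B).Adj ⟨P, hP1, hPnd⟩ ⟨Q, hQ1, hQnd⟩ :=
      ⟨huv, by rw [show (⟨P, hP1, hPnd⟩ :
        {P : Submodule F V // finrank F P = 1 ∧ (B.restrict P).Nondegenerate}).1 ⊔
        (⟨Q, hQ1, hQnd⟩ :
        {P : Submodule F V // finrank F P = 1 ∧ (B.restrict P).Nondegenerate}).1 = l
        from hsup]; exact hl⟩
    exact le_trans (SimpleGraph.edist_le hadj.toWalk) (by simp)
  by_cases hQR : Q = l' ⊓ l
  · have hQle' : Q ≤ l' := hQR ▸ hRle'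
    have hsup : P ⊔ Q = l' := sup_line hP1 hQ1 hl'.1 hPQ hPle hQle'
    have hadj : (ellipticCollinearityGraph B).Adj ⟨P, hP1, hPnd⟩ ⟨Q, hQ1, hQnd⟩ :=
      ⟨huv, by rw [show (⟨P, hP1, hPnd⟩ :
        {P : Submodule F V // finrank F P = 1 ∧ (B.restrict P).Nondegenerate}).1 ⊔
        (⟨Q, hQ1, hQnd⟩ :
        {P : Submodule F V // finrank F P = 1 ∧ (B.restrict P).Nondegenerate}).1 = l'
        from hsup]; exact hl'⟩
    exact le_trans (SimpleGraph.edist_le hadj.toWalk) (by simp)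
  set R : {P : Submodule F V // finrank F P = 1 ∧ (B.restrict P).Nondegenerate} :=
    ⟨l' ⊓ l, hinf1, hinfnd⟩ with hRdef
  have hadj1 : (ellipticCollinearityGraph B).Adj ⟨P, hP1, hPnd⟩ R := by
    refine ⟨fun h => hPR (congrArg Subtype.val h), ?_⟩
    have hsup : P ⊔ (l' ⊓ l) = l' := sup_line hP1 hinf1 hl'.1 hPR hPle hRle'
    show IsEllipticLine B (P ⊔ (l' ⊓ l))
    rw [hsup]; exact hl'
  have hadj2 : (ellipticCollinearityGraph B).Adj R ⟨Q, hQ1, hQnd⟩ := by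
    refine ⟨fun h => hQR (congrArg Subtype.val h).symm, ?_⟩
    have hsup : (l' ⊓ l) ⊔ Q = l :=
      sup_line hinf1 hQ1 hl.1 (fun h => hQR h.symm) hRle hQle
    show IsEllipticLine B ((l' ⊓ l) ⊔ Q)
    rw [hsup]; exact hl
  exact le_trans (SimpleGraph.edist_le (SimpleGraph.Walk.cons hadj1 hadj2.toWalk)) (by simp)
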